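/- arXiv:0904.3207 — 2 statements merged into one kernel-verified Lean document; each statement's English description precedes it below -/
import Mathlib

section
/- Lemma 4 (exponential sphere-sum bound). Let n_* > 2 be an integer, υ, ε > 0, and φ(b) = υ log b (log log b)^{1+ε} for b ≥ n_* + 1, with φ(n_* + 1) > 1. Let G ∈ 𝔾(n_*, φ). Then for every θ > 0 there exists a > 0 (depending only on θ, n_*, υ, ε) such that for every vertex x ∈ V there exists N_x ∈ ℕ with Σ_{y : ρ(x,y) = N} n(y)^{1+θ} ≤ exp(aN) for all N ≥ N_x. -/
open Real

noncomputable section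

/-- The repulsion function `φ(b) = υ log b (log log b)^{1+ε}`. -/
def phiRep (υ ε b : ℝ) : ℝ := υ * Real.log b * Real.log (Real.log b) ^ (1 + ε)

/-- `G` belongs to the class `𝔾(n_*, φ)`: any two distinct vertices whose degrees both
exceed `n_*` are at path distance at least `φ(max{n(x),n(y)})`. -/
def RepulsiveGraph {V : Type} (G : SimpleGraph V) [∀ v : V, Fintype (G.neighborSet v)]
    (nstar : ℕ) (φ : ℝ → ℝ) : Prop :=
  ∀ x y : V, x ≠ y → nstar < G.degree x → nstar < G.degree y →
    φ (max (G.degree x : ℝ) (G.degree y : ℝ)) ≤ (G.dist x y : ℝ)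

/-! ### Auxiliary lemmas -/

/-- Telescoping bound: if `f i ≤ j - i` for all pairs `i < j` in `I`, then the sum of `f`
over `I` is at most `(max - min) + f max`. -/
private lemma tele_sum {f : ℕ → ℝ} : ∀ (n : ℕ) (I : Finset ℕ) (hne : I.Nonempty), I.card ≤ n →
    (∀ i ∈ I, ∀ j ∈ I, i < j → f i ≤ (j : ℝ) - (i : ℝ)) →
    ∑ i ∈ I, f i ≤ ((I.max' hne : ℝ) - (I.min' hne : ℝ)) + f (I.max' hne) := by
  intro n
  induction n with
  | zero =>
    intro I hne hcard _
    have := Finset.card_pos.mpr hne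
    omega
  | succ n ih =>
    intro I hne hcard hpair
    have hMmem : I.max' hne ∈ I := I.max'_mem hne
    rcases (I.erase (I.max' hne)).eq_empty_or_nonempty with he | hne'
    · rcases (Finset.erase_eq_empty_iff I (I.max' hne)).mp he with h0 | h1
      · exact absurd h0 (Finset.nonempty_iff_ne_empty.mp hne)
      · have hminmax : I.min' hne = I.max' hne := by
          refine le_antisymm (I.min'_le _ hMmem) (Finset.le_min' _ _ _ ?_)
          intro z hz
          rw [h1, Finset.mem_singleton] at hz
          exact hz.ge
        have hsum : ∑ i ∈ I, f i = f (I.max' hne) := by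
          conv_lhs => rw [h1]
          exact Finset.sum_singleton _ _
        rw [hsum, hminmax]
        simp
    · have hsub : I.erase (I.max' hne) ⊆ I := Finset.erase_subset _ _
      have hcard' : (I.erase (I.max' hne)).card ≤ n := by
        have := Finset.card_erase_of_mem hMmem
        omega
      have ihe := ih (I.erase (I.max' hne)) hne' hcard'
        (fun i hi j hj hij => hpair i (hsub hi) j (hsub hj) hij)
      have hM'memE := (I.erase (I.max' hne)).max'_mem hne'
      have hM'mem : (I.erase (I.max' hne)).max' hne' ∈ I := hsub hM'memE
      have hM'ne : (I.erase (I.max' hne)).max' hne' ≠ I.max' hne :=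
        (Finset.mem_erase.mp hM'memE).1
      have hM'lt : (I.erase (I.max' hne)).max' hne' < I.max' hne :=
        lt_of_le_of_ne (I.le_max' _ hM'mem) hM'ne
      have hM'ltR : ((I.erase (I.max' hne)).max' hne' : ℝ) < (I.max' hne : ℝ) := by
        exact_mod_cast hM'lt
      have hfM' : f ((I.erase (I.max' hne)).max' hne')
          ≤ (I.max' hne : ℝ) - ((I.erase (I.max' hne)).max' hne' : ℝ) :=
        hpair _ hM'mem _ hMmem hM'lt
      have hmin : (I.min' hne : ℝ) ≤ ((I.erase (I.max' hne)).min' hne' : ℝ) := by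
        exact_mod_cast I.min'_le _ (hsub ((I.erase (I.max' hne)).min'_mem hne'))
      have hsum : ∑ i ∈ I, f i = ∑ i ∈ I.erase (I.max' hne), f i + f (I.max' hne) :=
        (Finset.sum_erase_add I f hMmem).symm
      rw [hsum]
      linarith

/-- Distance between vertices along a walk is at most the difference of indices. -/
private lemma dist_getVert_le {V : Type} {G : SimpleGraph V} (hconn : G.Connected) :
    ∀ {u v : V} (p : G.Walk u v) (i j : ℕ), i ≤ j →
      G.dist (p.getVert i) (p.getVert j) ≤ j - i := by
  intro u v p
  induction p with
  | nil =>
    intro i j _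
    rw [SimpleGraph.Walk.getVert_of_length_le _ (by simp),
      SimpleGraph.Walk.getVert_of_length_le _ (by simp), SimpleGraph.dist_self]
    exact Nat.zero_le _
  | @cons u w v h q ih =>
    intro i j hij
    cases i with
    | zero =>
      cases j with
      | zero => simp
      | succ j =>
        rw [SimpleGraph.Walk.getVert_zero, SimpleGraph.Walk.getVert_cons_succ]
        have h1 : G.dist u w ≤ 1 := by
          simpa using SimpleGraph.dist_le (SimpleGraph.Walk.cons h SimpleGraph.Walk.nil)
        have h2 : G.dist w (q.getVert j) ≤ j := by
          have := ih 0 j (Nat.zero_le _)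
          simpa [SimpleGraph.Walk.getVert_zero] using this
        have h3 := hconn.dist_triangle (u := u) (v := w) (w := q.getVert j)
        omega
    | succ i =>
      cases j with
      | zero => omega
      | succ j =>
        rw [SimpleGraph.Walk.getVert_cons_succ, SimpleGraph.Walk.getVert_cons_succ]
        have := ih i j (by omega)
        omega

/-- Vertices of a path with distinct indices are distinct. -/
private lemma getVert_ne_of_isPath {V : Type} {G : SimpleGraph V} :
    ∀ {u v : V} (p : G.Walk u v), p.IsPath → ∀ i j : ℕ, i < j → j ≤ p.length →
      p.getVert i ≠ p.getVert j := by
  intro u v p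
  induction p with
  | nil =>
    intro _ i j hij hj
    simp at hj
    omega
  | @cons u w v h q ih =>
    intro hp i j hij hj
    rw [SimpleGraph.Walk.cons_isPath_iff] at hp
    cases i with
    | zero =>
      cases j with
      | zero => omega
      | succ j =>
        rw [SimpleGraph.Walk.getVert_zero, SimpleGraph.Walk.getVert_cons_succ]
        intro heq
        apply hp.2
        rw [SimpleGraph.Walk.mem_support_iff_exists_getVert]
        refine ⟨j, heq.symm, ?_⟩
        simp only [SimpleGraph.Walk.length_cons] at hj
        omega
    | succ i =>
      cases j with
      | zero => omega
      | succ j =>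
        rw [SimpleGraph.Walk.getVert_cons_succ, SimpleGraph.Walk.getVert_cons_succ]
        refine ih hp.1 i j (by omega) ?_
        simp only [SimpleGraph.Walk.length_cons] at hj
        omega

/-- Weight of a walk: product of the inverse degrees of its vertices except the last. -/
private def wwt {V : Type} (G : SimpleGraph V) [∀ v : V, Fintype (G.neighborSet v)]
    {u y : V} (p : G.Walk u y) : ENNReal :=
  ∏ i ∈ Finset.range p.length, ((G.degree (p.getVert i) : ENNReal))⁻¹

private lemma wwt_cons {V : Type} (G : SimpleGraph V) [∀ v : V, Fintype (G.neighborSet v)]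
    {u w y : V} (h : G.Adj u w) (q : G.Walk w y) :
    wwt G (SimpleGraph.Walk.cons h q) = ((G.degree u : ENNReal))⁻¹ * wwt G q := by
  rw [wwt, wwt, SimpleGraph.Walk.length_cons, Finset.prod_range_succ', mul_comm]
  congr 1

/-- The total weight of all walks of a given length from a fixed vertex is at most 1. -/
private lemma wwt_mass {V : Type} (G : SimpleGraph V) [∀ v : V, Fintype (G.neighborSet v)] :
    ∀ (N : ℕ) (u : V), (∑' s : Σ y : V, {p : G.Walk u y // p.length = N}, wwt G s.2.1) ≤ 1 := by
  intro N
  induction N with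
  | zero =>
    intro u
    haveI hss : Subsingleton (Σ y : V, {p : G.Walk u y // p.length = 0}) := by
      constructor
      rintro ⟨y, p, hp⟩ ⟨y', p', hp'⟩
      cases p with
      | nil =>
        cases p' with
        | nil => rfl
        | cons h' q' => simp at hp'
      | cons h q => simp at hp
    rcases isEmpty_or_nonempty (Σ y : V, {p : G.Walk u y // p.length = 0}) with hE | hN
    · rw [tsum_empty]
      exact zero_le_one
    · obtain ⟨s⟩ := hN
      rw [tsum_eq_single s (fun b hb => (hb (Subsingleton.elim b s)).elim)]
      obtain ⟨y, p, hp⟩ := s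
      cases p with
      | nil => simp [wwt]
      | cons h q => simp at hp
  | succ N ih =>
    intro u
    let e : (Σ y : V, {p : G.Walk u y // p.length = N + 1}) ≃
        (Σ z : G.neighborSet u, Σ y : V, {p : G.Walk (z : V) y // p.length = N}) :=
      { toFun := fun s =>
          match s with
          | ⟨y, ⟨SimpleGraph.Walk.cons h q, hp⟩⟩ =>
            ⟨⟨_, h⟩, ⟨y, ⟨q, Nat.succ_injective (by simpa using hp)⟩⟩⟩
        invFun := fun t =>
          ⟨t.2.1, ⟨SimpleGraph.Walk.cons ((G.mem_neighborSet u _).mp t.1.2) t.2.2.1, by simp [t.2.2.2]⟩⟩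
        left_inv := by
          rintro ⟨y, ⟨p, hp⟩⟩
          cases p with
          | nil => simp at hp
          | cons h q => rfl
        right_inv := by
          rintro ⟨⟨z, hz⟩, ⟨y, ⟨q, hq⟩⟩⟩
          rfl }
    have he : ∀ t : (Σ z : G.neighborSet u, Σ y : V, {p : G.Walk (z : V) y // p.length = N}),
        wwt G ((e.symm t).2.1) = ((G.degree u : ENNReal))⁻¹ * wwt G t.2.2.1 := by
      rintro ⟨⟨z, hz⟩, ⟨y, ⟨q, hq⟩⟩⟩
      exact wwt_cons G hz q
    calc (∑' s : Σ y : V, {p : G.Walk u y // p.length = N + 1}, wwt G s.2.1)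
        = ∑' t : (Σ z : G.neighborSet u, Σ y : V, {p : G.Walk (z : V) y // p.length = N}),
            wwt G ((e.symm t).2.1) :=
          (e.symm.tsum_eq (fun s => wwt G s.2.1)).symm
      _ = ∑' t : (Σ z : G.neighborSet u, Σ y : V, {p : G.Walk (z : V) y // p.length = N}),
            ((G.degree u : ENNReal))⁻¹ * wwt G t.2.2.1 := tsum_congr he
      _ = ∑' z : G.neighborSet u,
            ∑' s : (Σ y : V, {p : G.Walk (z : V) y // p.length = N}),
              ((G.degree u : ENNReal))⁻¹ * wwt G s.2.1 :=
          ENNReal.tsum_sigma' _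
      _ = ∑' z : G.neighborSet u,
            ((G.degree u : ENNReal))⁻¹ *
              ∑' s : (Σ y : V, {p : G.Walk (z : V) y // p.length = N}), wwt G s.2.1 :=
          tsum_congr (fun z => ENNReal.tsum_mul_left)
      _ ≤ ∑' _z : G.neighborSet u, ((G.degree u : ENNReal))⁻¹ * 1 :=
          ENNReal.tsum_le_tsum (fun z => mul_le_mul_right (ih z) _)
      _ = (G.degree u : ENNReal) * ((G.degree u : ENNReal))⁻¹ := by
          rw [tsum_fintype]
          rw [Finset.sum_const, Finset.card_univ, SimpleGraph.card_neighborSet_eq_degree, nsmul_eq_mul, mul_one]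
      _ ≤ 1 := by
          by_cases hd : G.degree u = 0
          · simp [hd]
          · rw [ENNReal.mul_inv_cancel (by exact_mod_cast hd) (ENNReal.natCast_ne_top _)]

/-- The core per-path estimate: along any path starting at `x` in a repulsive graph,
the sum of the logarithms of the degrees grows at most linearly. -/
private lemma core_bound {V : Type} {G : SimpleGraph V} [∀ v : V, Fintype (G.neighborSet v)]
    (hconn : G.Connected) {nstar : ℕ} {υ ε C0 : ℝ}
    (hrep : RepulsiveGraph G nstar (phiRep υ ε))
    (hC0pos : 0 < C0)
    (hlognstar : 0 < Real.log nstar)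
    (hnstar1 : 1 ≤ nstar)
    (hlogle : ∀ b : ℝ, (nstar : ℝ) + 1 ≤ b → Real.log b ≤ C0 * phiRep υ ε b)
    (hphimono : ∀ b c : ℝ, (nstar : ℝ) + 1 ≤ b → b ≤ c → phiRep υ ε b ≤ phiRep υ ε c)
    (x : V) :
    ∃ c : ℝ, 0 ≤ c ∧ ∀ (N : ℕ) (y : V) (p : G.Walk x y),
      p.IsPath → p.length = N →
      ∑ i ∈ Finset.range (N + 1), Real.log (G.degree (p.getVert i))
        ≤ (Real.log nstar + 2 * C0) * N + c := by
  classical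
  -- the "small" part of the sum is handled uniformly
  have hsmall : ∀ (N : ℕ) (y : V) (p : G.Walk x y),
      ∑ i ∈ (Finset.range (N + 1)).filter (fun i => ¬ nstar < G.degree (p.getVert i)),
        Real.log (G.degree (p.getVert i)) ≤ ((N : ℝ) + 1) * Real.log nstar := by
    intro N y p
    have hterm : ∀ i ∈ (Finset.range (N + 1)).filter
        (fun i => ¬ nstar < G.degree (p.getVert i)),
        Real.log (G.degree (p.getVert i)) ≤ Real.log nstar := by
      intro i hi
      rw [Finset.mem_filter] at hi
      by_cases hz : G.degree (p.getVert i) = 0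
      · rw [hz]
        simpa using hlognstar.le
      · apply Real.log_le_log (by exact_mod_cast Nat.pos_of_ne_zero hz)
        exact_mod_cast Nat.le_of_not_lt hi.2
    calc ∑ i ∈ (Finset.range (N + 1)).filter (fun i => ¬ nstar < G.degree (p.getVert i)),
          Real.log (G.degree (p.getVert i))
        ≤ ∑ _i ∈ (Finset.range (N + 1)).filter (fun i => ¬ nstar < G.degree (p.getVert i)),
            Real.log nstar := Finset.sum_le_sum hterm
      _ = ((Finset.range (N + 1)).filter
            (fun i => ¬ nstar < G.degree (p.getVert i))).card * Real.log nstar := by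
          rw [Finset.sum_const, nsmul_eq_mul]
      _ ≤ ((N : ℝ) + 1) * Real.log nstar := by
          apply mul_le_mul_of_nonneg_right _ hlognstar.le
          have h1 : ((Finset.range (N + 1)).filter
              (fun i => ¬ nstar < G.degree (p.getVert i))).card ≤ N + 1 := by
            calc _ ≤ (Finset.range (N + 1)).card := Finset.card_filter_le _ _
              _ = N + 1 := Finset.card_range _
          exact_mod_cast h1
  -- vertices on a walk from x stay in the ball
  have hdistball : ∀ (y : V) (p : G.Walk x y) (m : ℕ), G.dist x (p.getVert m) ≤ m := by
    intro y p m
    have := dist_getVert_le hconn p 0 m (Nat.zero_le _)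
    simpa [SimpleGraph.Walk.getVert_zero] using this
  by_cases htwo : ∃ z w : V, z ≠ w ∧ nstar < G.degree z ∧ nstar < G.degree w
  · obtain ⟨z, w, hzw, hz, hw⟩ := htwo
    set Knat : ℕ := max (G.dist x z) (G.dist x w) with hKnat
    refine ⟨Real.log nstar + C0 * ((Knat : ℝ)), by positivity, ?_⟩
    intro N y p hpath hlen
    set I : Finset ℕ := (Finset.range (N + 1)).filter
      (fun i => nstar < G.degree (p.getVert i)) with hI
    have hIN : ∀ i ∈ I, i ≤ N := by
      intro i hi
      rw [hI, Finset.mem_filter, Finset.mem_range] at hi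
      omega
    have hIbig : ∀ i ∈ I, nstar < G.degree (p.getVert i) := by
      intro i hi
      rw [hI, Finset.mem_filter] at hi
      exact hi.2
    have hIbigR : ∀ i ∈ I, (nstar : ℝ) + 1 ≤ (G.degree (p.getVert i) : ℝ) := by
      intro i hi
      have := hIbig i hi
      exact_mod_cast this
    -- the sum of φ over big indices is controlled
    have hbigsum : ∑ i ∈ I, Real.log (G.degree (p.getVert i))
        ≤ C0 * (2 * (N : ℝ) + (Knat : ℝ)) := by
      rcases I.eq_empty_or_nonempty with hIe | hne
      · rw [hIe]
        simp
        positivity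
      · -- pairwise repulsion along the path
        have hpair : ∀ i ∈ I, ∀ j ∈ I, i < j →
            phiRep υ ε (G.degree (p.getVert i)) ≤ (j : ℝ) - (i : ℝ) := by
          intro i hi j hj hij
          have hne_v : p.getVert i ≠ p.getVert j :=
            getVert_ne_of_isPath p hpath i j hij (by rw [hlen]; exact hIN j hj)
          have hd := hrep (p.getVert i) (p.getVert j) hne_v (hIbig i hi) (hIbig j hj)
          have hmax : phiRep υ ε (G.degree (p.getVert i)) ≤
              phiRep υ ε (max (G.degree (p.getVert i) : ℝ) (G.degree (p.getVert j) : ℝ)) :=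
            hphimono _ _ (hIbigR i hi) (le_max_left _ _)
          have hdd : G.dist (p.getVert i) (p.getVert j) ≤ j - i :=
            dist_getVert_le hconn p i j hij.le
          have hddR : (G.dist (p.getVert i) (p.getVert j) : ℝ) ≤ (j : ℝ) - (i : ℝ) := by
            have h1 : ((j - i : ℕ) : ℝ) = (j : ℝ) - (i : ℝ) := by
              rw [Nat.cast_sub hij.le]
            rw [← h1]
            exact_mod_cast hdd
          linarith
        have htele := tele_sum I.card I hne le_rfl hpair
        -- bound φ at the maximal big index
        set m : ℕ := I.max' hne with hm
        have hmI : m ∈ I := I.max'_mem hne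
        have hmN : m ≤ N := hIN m hmI
        have hphim : phiRep υ ε (G.degree (p.getVert m)) ≤ (N : ℝ) + (Knat : ℝ) := by
          by_cases hcase : p.getVert m = z
          · -- use the other big vertex w
            have hne_v : p.getVert m ≠ w := by rw [hcase]; exact hzw
            have hd := hrep (p.getVert m) w hne_v (hIbig m hmI) hw
            have hmax : phiRep υ ε (G.degree (p.getVert m)) ≤
                phiRep υ ε (max (G.degree (p.getVert m) : ℝ) (G.degree w : ℝ)) :=
              hphimono _ _ (hIbigR m hmI) (le_max_left _ _)
            have hdd : G.dist (p.getVert m) w ≤ N + Knat := by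
              have h1 := hconn.dist_triangle (u := p.getVert m) (v := x) (w := w)
              have h2 : G.dist (p.getVert m) x ≤ N := by
                rw [SimpleGraph.dist_comm]
                exact le_trans (hdistball y p m) hmN
              have h3 : G.dist x w ≤ Knat := le_max_right _ _
              omega
            have hddR : (G.dist (p.getVert m) w : ℝ) ≤ (N : ℝ) + (Knat : ℝ) := by
              exact_mod_cast hdd
            linarith
          · have hd := hrep (p.getVert m) z hcase (hIbig m hmI) hz
            have hmax : phiRep υ ε (G.degree (p.getVert m)) ≤
                phiRep υ ε (max (G.degree (p.getVert m) : ℝ) (G.degree z : ℝ)) :=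
              hphimono _ _ (hIbigR m hmI) (le_max_left _ _)
            have hdd : G.dist (p.getVert m) z ≤ N + Knat := by
              have h1 := hconn.dist_triangle (u := p.getVert m) (v := x) (w := z)
              have h2 : G.dist (p.getVert m) x ≤ N := by
                rw [SimpleGraph.dist_comm]
                exact le_trans (hdistball y p m) hmN
              have h3 : G.dist x z ≤ Knat := le_max_left _ _
              omega
            have hddR : (G.dist (p.getVert m) z : ℝ) ≤ (N : ℝ) + (Knat : ℝ) := by
              exact_mod_cast hdd
            linarith
        -- combine
        have hsumphi : ∑ i ∈ I, phiRep υ ε (G.degree (p.getVert i))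
            ≤ 2 * (N : ℝ) + (Knat : ℝ) := by
          have hmaxN : ((I.max' hne : ℕ) : ℝ) ≤ (N : ℝ) := by
            exact_mod_cast hIN _ (I.max'_mem hne)
          have hmin0 : (0 : ℝ) ≤ ((I.min' hne : ℕ) : ℝ) := by positivity
          calc ∑ i ∈ I, phiRep υ ε (G.degree (p.getVert i))
              ≤ ((I.max' hne : ℝ) - (I.min' hne : ℝ))
                + phiRep υ ε (G.degree (p.getVert (I.max' hne))) := htele
            _ ≤ (N : ℝ) + ((N : ℝ) + (Knat : ℝ)) := by
                have := hphim
                rw [← hm] at *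
                linarith
            _ = 2 * (N : ℝ) + (Knat : ℝ) := by ring
        calc ∑ i ∈ I, Real.log (G.degree (p.getVert i))
            ≤ ∑ i ∈ I, C0 * phiRep υ ε (G.degree (p.getVert i)) :=
              Finset.sum_le_sum (fun i hi => hlogle _ (hIbigR i hi))
          _ = C0 * ∑ i ∈ I, phiRep υ ε (G.degree (p.getVert i)) := by
              rw [Finset.mul_sum]
          _ ≤ C0 * (2 * (N : ℝ) + (Knat : ℝ)) :=
              mul_le_mul_of_nonneg_left hsumphi hC0pos.le
    -- combine small and big parts
    have hsplit := Finset.sum_filter_add_sum_filter_not (Finset.range (N + 1))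
      (fun i => nstar < G.degree (p.getVert i))
      (fun i => Real.log (G.degree (p.getVert i)))
    have hsm := hsmall N y p
    rw [← hsplit]
    have : ∑ i ∈ I, Real.log (G.degree (p.getVert i))
        + ∑ i ∈ (Finset.range (N + 1)).filter (fun i => ¬ nstar < G.degree (p.getVert i)),
            Real.log (G.degree (p.getVert i))
        ≤ C0 * (2 * (N : ℝ) + (Knat : ℝ)) + ((N : ℝ) + 1) * Real.log nstar := by
      exact add_le_add hbigsum hsm
    rw [hI] at this
    linarith
  · -- at most one vertex of large degree exists
    push_neg at htwo
    by_cases hbig : ∃ z : V, nstar < G.degree z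
    · obtain ⟨z0, hz0⟩ := hbig
      have hz0log : 0 ≤ Real.log (G.degree z0) := by
        apply Real.log_nonneg
        have : 1 ≤ G.degree z0 := by omega
        exact_mod_cast this
      refine ⟨Real.log nstar + Real.log (G.degree z0), by positivity, ?_⟩
      intro N y p hpath hlen
      set I : Finset ℕ := (Finset.range (N + 1)).filter
        (fun i => nstar < G.degree (p.getVert i)) with hI
      have hIz0 : ∀ i ∈ I, p.getVert i = z0 := by
        intro i hi
        rw [hI, Finset.mem_filter] at hi
        by_contra hne
        exact absurd hz0 (Nat.not_lt.mpr (htwo (p.getVert i) z0 hne hi.2))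
      have hcard : I.card ≤ 1 := by
        rw [Finset.card_le_one]
        intro i hi j hj
        by_contra hij
        rcases Nat.lt_or_ge i j with hlt | hge
        · have hjN : j ≤ N := by
            rw [hI, Finset.mem_filter, Finset.mem_range] at hj
            omega
          exact getVert_ne_of_isPath p hpath i j hlt (by rw [hlen]; exact hjN)
            (by rw [hIz0 i hi, hIz0 j hj])
        · have hlt : j < i := by omega
          have hiN : i ≤ N := by
            rw [hI, Finset.mem_filter, Finset.mem_range] at hi
            omega
          exact getVert_ne_of_isPath p hpath j i hlt (by rw [hlen]; exact hiN)
            (by rw [hIz0 i hi, hIz0 j hj])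
      have hbigsum : ∑ i ∈ I, Real.log (G.degree (p.getVert i)) ≤ Real.log (G.degree z0) := by
        calc ∑ i ∈ I, Real.log (G.degree (p.getVert i))
            = ∑ _i ∈ I, Real.log (G.degree z0) :=
              Finset.sum_congr rfl (fun i hi => by rw [hIz0 i hi])
          _ = I.card * Real.log (G.degree z0) := by rw [Finset.sum_const, nsmul_eq_mul]
          _ ≤ 1 * Real.log (G.degree z0) := by
              apply mul_le_mul_of_nonneg_right _ hz0log
              exact_mod_cast hcard
          _ = Real.log (G.degree z0) := one_mul _
      have hsplit := Finset.sum_filter_add_sum_filter_not (Finset.range (N + 1))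
        (fun i => nstar < G.degree (p.getVert i))
        (fun i => Real.log (G.degree (p.getVert i)))
      have hsm := hsmall N y p
      rw [← hsplit]
      have h2 : ∑ i ∈ I, Real.log (G.degree (p.getVert i))
          + ∑ i ∈ (Finset.range (N + 1)).filter (fun i => ¬ nstar < G.degree (p.getVert i)),
              Real.log (G.degree (p.getVert i))
          ≤ Real.log (G.degree z0) + ((N : ℝ) + 1) * Real.log nstar :=
        add_le_add hbigsum hsm
      rw [hI] at h2
      have hCN : 0 ≤ 2 * C0 * (N : ℝ) := by positivity
      linarith
    · push_neg at hbig
      refine ⟨Real.log nstar, hlognstar.le, ?_⟩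
      intro N y p hpath hlen
      set I : Finset ℕ := (Finset.range (N + 1)).filter
        (fun i => nstar < G.degree (p.getVert i)) with hI
      have hIe : I = ∅ := by
        rw [hI, Finset.filter_eq_empty_iff]
        intro i _
        exact Nat.not_lt.mpr (hbig (p.getVert i))
      have hsplit := Finset.sum_filter_add_sum_filter_not (Finset.range (N + 1))
        (fun i => nstar < G.degree (p.getVert i))
        (fun i => Real.log (G.degree (p.getVert i)))
      have hsm := hsmall N y p
      rw [← hsplit]
      have h2 : ∑ i ∈ (Finset.range (N + 1)).filter
          (fun i => nstar < G.degree (p.getVert i)),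
            Real.log (G.degree (p.getVert i)) = 0 := by
        rw [← hI, hIe, Finset.sum_empty]
      have hCN : 0 ≤ 2 * C0 * (N : ℝ) := by positivity
      rw [h2]
      linarith

/-- **Lemma 4 (exponential sphere-sum bound).** Let `n_* > 2`, `υ, ε > 0` and
`φ(b) = υ log b (log log b)^{1+ε}` with `φ(n_*+1) > 1`. Then for every `θ > 0` there is
`a > 0`, depending only on `θ, n_*, υ, ε`, such that for every `G ∈ 𝔾(n_*,φ)` and every
vertex `x` there is `N_x ∈ ℕ` with `Σ_{y : ρ(x,y)=N} n(y)^{1+θ} ≤ exp(aN)` for `N ≥ N_x`. -/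
theorem exponential_sphere_sum_bound
    (nstar : ℕ) (hn : 2 < nstar) (υ ε : ℝ) (hυ : 0 < υ) (hε : 0 < ε)
    (hφ1 : 1 < phiRep υ ε ((nstar : ℝ) + 1)) (θ : ℝ) (hθ : 0 < θ) :
    ∃ a : ℝ, 0 < a ∧
      ∀ (V : Type) (_ : Countable V) (G : SimpleGraph V)
        (_ : ∀ v : V, Fintype (G.neighborSet v)),
        G.Connected → RepulsiveGraph G nstar (phiRep υ ε) →
        ∀ x : V, ∃ Nx : ℕ, ∀ N : ℕ, Nx ≤ N →
          (∑' y : {y : V // G.dist x y = N},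
              ENNReal.ofReal ((G.degree (y : V) : ℝ) ^ (1 + θ))) ≤
            ENNReal.ofReal (Real.exp (a * N)) := by
  classical
  -- basic facts about `nstar`
  have h4 : (4 : ℝ) ≤ (nstar : ℝ) + 1 := by
    have : (3 : ℝ) ≤ (nstar : ℝ) := by exact_mod_cast hn
    linarith
  have hlog1 : 1 < Real.log ((nstar : ℝ) + 1) := by
    rw [Real.lt_log_iff_exp_lt (by linarith)]
    calc Real.exp 1 < 2.7182818286 := Real.exp_one_lt_d9
      _ ≤ (nstar : ℝ) + 1 := by linarith
  have hs : 0 < Real.log (Real.log ((nstar : ℝ) + 1)) := Real.log_pos hlog1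
  set s : ℝ := Real.log (Real.log ((nstar : ℝ) + 1)) with hs_def
  have hspow : 0 < s ^ (1 + ε) := Real.rpow_pos_of_pos hs _
  set C0 : ℝ := 1 / (υ * s ^ (1 + ε)) with hC0_def
  have hC0pos : 0 < C0 := by
    rw [hC0_def]
    positivity
  have hlognstar : 0 < Real.log nstar := by
    apply Real.log_pos
    exact_mod_cast lt_trans (by norm_num) hn
  -- `log b ≤ C0 * φ(b)` for `b ≥ nstar + 1`
  have hlogle : ∀ b : ℝ, (nstar : ℝ) + 1 ≤ b → Real.log b ≤ C0 * phiRep υ ε b := by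
    intro b hb
    have hlb : Real.log ((nstar : ℝ) + 1) ≤ Real.log b := Real.log_le_log (by linarith) hb
    have hlb0 : 0 < Real.log b := by linarith
    have hsb : s ≤ Real.log (Real.log b) :=
      Real.log_le_log (by linarith) hlb
    have hpow : s ^ (1 + ε) ≤ Real.log (Real.log b) ^ (1 + ε) :=
      Real.rpow_le_rpow hs.le hsb (by linarith)
    have h1 : C0 * (υ * s ^ (1 + ε)) = 1 := by
      rw [hC0_def]
      field_simp
    calc Real.log b = Real.log b * (C0 * (υ * s ^ (1 + ε))) := by rw [h1, mul_one]
      _ ≤ Real.log b * (C0 * (υ * Real.log (Real.log b) ^ (1 + ε))) := by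
          apply mul_le_mul_of_nonneg_left _ hlb0.le
          apply mul_le_mul_of_nonneg_left _ hC0pos.le
          exact mul_le_mul_of_nonneg_left hpow hυ.le
      _ = C0 * phiRep υ ε b := by rw [phiRep]; ring
  -- monotonicity of `φ` on `[nstar+1, ∞)`
  have hphimono : ∀ b c : ℝ, (nstar : ℝ) + 1 ≤ b → b ≤ c → phiRep υ ε b ≤ phiRep υ ε c := by
    intro b c hb hbc
    have hb0 : (0 : ℝ) < b := by linarith
    have h1 : Real.log b ≤ Real.log c := Real.log_le_log hb0 hbc
    have hlb : 1 < Real.log b := lt_of_lt_of_le hlog1 (Real.log_le_log (by linarith) hb)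
    have h2 : Real.log (Real.log b) ≤ Real.log (Real.log c) :=
      Real.log_le_log (by linarith) h1
    have h2'' : 0 < Real.log (Real.log b) := Real.log_pos hlb
    have h2' : 0 ≤ Real.log (Real.log b) := h2''.le
    have h3 : Real.log (Real.log b) ^ (1 + ε) ≤ Real.log (Real.log c) ^ (1 + ε) :=
      Real.rpow_le_rpow h2' h2 (by linarith)
    have h4' : 0 ≤ Real.log (Real.log b) ^ (1 + ε) :=
      (Real.rpow_pos_of_pos h2'' _).le
    rw [phiRep, phiRep]
    have hbb : 0 ≤ Real.log b := by linarith
    nlinarith [mul_le_mul h1 h3 h4' (by linarith : (0:ℝ) ≤ Real.log c)]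
  -- the exponential rate
  refine ⟨(2 + θ) * (Real.log nstar + 2 * C0) + 1, by positivity, ?_⟩
  intro V _ G instFin hconn hrep x
  obtain ⟨c, hc0, hcore⟩ := core_bound hconn hrep hC0pos hlognstar (by omega) hlogle hphimono x
  refine ⟨max 1 ⌈(2 + θ) * c⌉₊, ?_⟩
  intro N hN
  have hN1 : 1 ≤ N := le_trans (le_max_left _ _) hN
  have hNc : (2 + θ) * c ≤ (N : ℝ) := by
    have h1 : ⌈(2 + θ) * c⌉₊ ≤ N := le_trans (le_max_right _ _) hN
    calc (2 + θ) * c ≤ (⌈(2 + θ) * c⌉₊ : ℝ) := Nat.le_ceil _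
      _ ≤ (N : ℝ) := by exact_mod_cast h1
  set a : ℝ := (2 + θ) * (Real.log nstar + 2 * C0) + 1 with ha_def
  -- choose geodesic paths
  have hgeo : ∀ y : {y : V // G.dist x y = N},
      ∃ p : G.Walk x (y : V), p.IsPath ∧ p.length = N := by
    rintro ⟨y, hy⟩
    obtain ⟨p, hp1, hp2⟩ := hconn.exists_path_of_dist x y
    exact ⟨p, hp1, by rw [hp2, hy]⟩
  choose P hP1 hP2 using hgeo
  -- the injection from the sphere into the set of walks of length N
  let F : {y : V // G.dist x y = N} → (Σ y : V, {p : G.Walk x y // p.length = N}) :=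
    fun y => ⟨(y : V), ⟨P y, hP2 y⟩⟩
  have hFinj : Function.Injective F := by
    intro y y' h
    have : (y : V) = (y' : V) := congrArg Sigma.fst h
    exact Subtype.ext this
  -- the pointwise bound
  have hpt : ∀ y : {y : V // G.dist x y = N},
      ENNReal.ofReal ((G.degree (y : V) : ℝ) ^ (1 + θ)) ≤
        ENNReal.ofReal (Real.exp (a * N)) * wwt G (P y) := by
    intro y
    have hpath := hP1 y
    have hlen := hP2 y
    -- degrees along the path are positive
    have hDpos : ∀ i, i ≤ N → 0 < G.degree ((P y).getVert i) := by
      intro i hi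
      rcases lt_or_eq_of_le hi with hlt | heq
      · rw [SimpleGraph.degree_pos_iff_exists_adj]
        exact ⟨_, (P y).adj_getVert_succ (by rw [hlen]; omega)⟩
      · rw [SimpleGraph.degree_pos_iff_exists_adj]
        subst heq
        have hadj : G.Adj ((P y).getVert (i - 1)) ((P y).getVert i) := by
          have h1 : i - 1 < (P y).length := by omega
          have := (P y).adj_getVert_succ h1
          have h2 : i - 1 + 1 = i := by omega
          rwa [h2] at this
        exact ⟨_, hadj.symm⟩
    have hyN : (P y).getVert N = (y : V) :=
      (P y).getVert_of_length_le (le_of_eq hlen)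
    -- the real inequality
    have hreal : ((G.degree (y : V) : ℝ)) ^ (1 + θ)
        * ∏ i ∈ Finset.range N, (G.degree ((P y).getVert i) : ℝ) ≤ Real.exp (a * N) := by
      have hDN : (0 : ℝ) < (G.degree ((P y).getVert N) : ℝ) := by
        exact_mod_cast hDpos N le_rfl
      have hdeg : G.degree (y : V) = G.degree ((P y).getVert N) := by rw [hyN]
      have e1 : ((G.degree (y : V) : ℝ)) ^ (1 + θ)
          = Real.exp ((1 + θ) * Real.log (G.degree ((P y).getVert N))) := by
        rw [hdeg, Real.rpow_def_of_pos hDN, mul_comm]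
      have e2 : ∏ i ∈ Finset.range N, (G.degree ((P y).getVert i) : ℝ)
          = Real.exp (∑ i ∈ Finset.range N, Real.log (G.degree ((P y).getVert i))) := by
        rw [Real.exp_sum]
        refine Finset.prod_congr rfl (fun i hi => ?_)
        rw [Finset.mem_range] at hi
        rw [Real.exp_log (by exact_mod_cast hDpos i (by omega))]
      rw [e1, e2, ← Real.exp_add]
      apply Real.exp_le_exp.mpr
      have hsum := hcore N (y : V) (P y) hpath hlen
      have hlognn : ∀ i ∈ Finset.range (N + 1),
          0 ≤ Real.log (G.degree ((P y).getVert i)) := by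
        intro i hi
        rw [Finset.mem_range] at hi
        apply Real.log_nonneg
        have := hDpos i (by omega)
        exact_mod_cast this
      have hsplit : ∑ i ∈ Finset.range (N + 1), Real.log (G.degree ((P y).getVert i))
          = ∑ i ∈ Finset.range N, Real.log (G.degree ((P y).getVert i))
            + Real.log (G.degree ((P y).getVert N)) := Finset.sum_range_succ _ _
      have hpos1 : 0 ≤ ∑ i ∈ Finset.range N, Real.log (G.degree ((P y).getVert i)) :=
        Finset.sum_nonneg (fun i hi => hlognn i (by
          rw [Finset.mem_range] at *
          omega))
      have hpos2 : 0 ≤ Real.log (G.degree ((P y).getVert N)) :=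
        hlognn N (by rw [Finset.mem_range]; omega)
      have hkey : (1 + θ) * Real.log (G.degree ((P y).getVert N))
          + ∑ i ∈ Finset.range N, Real.log (G.degree ((P y).getVert i))
          ≤ (2 + θ) * ∑ i ∈ Finset.range (N + 1), Real.log (G.degree ((P y).getVert i)) := by
        rw [hsplit]
        nlinarith
      calc (1 + θ) * Real.log (G.degree ((P y).getVert N))
            + ∑ i ∈ Finset.range N, Real.log (G.degree ((P y).getVert i))
          ≤ (2 + θ) * ∑ i ∈ Finset.range (N + 1), Real.log (G.degree ((P y).getVert i)) := hkey
        _ ≤ (2 + θ) * ((Real.log nstar + 2 * C0) * N + c) := by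
            apply mul_le_mul_of_nonneg_left hsum (by linarith)
        _ = (2 + θ) * (Real.log nstar + 2 * C0) * N + (2 + θ) * c := by ring
        _ ≤ (2 + θ) * (Real.log nstar + 2 * C0) * N + N := by linarith
        _ = a * N := by rw [ha_def]; ring
    -- pass to ENNReal
    have hwwt : wwt G (P y)
        = (∏ i ∈ Finset.range N, (G.degree ((P y).getVert i) : ENNReal))⁻¹ := by
      rw [wwt, hlen, ENNReal.prod_inv_distrib]
      intro i hi j hj hij
      left
      rw [Finset.mem_coe, Finset.mem_range] at hi
      have := hDpos i (by omega)
      exact_mod_cast this.ne'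
    rw [hwwt]
    set PP : ENNReal := ∏ i ∈ Finset.range N, (G.degree ((P y).getVert i) : ENNReal) with hPP
    have hPP0 : PP ≠ 0 := by
      rw [hPP, Finset.prod_ne_zero_iff]
      intro i hi
      rw [Finset.mem_range] at hi
      have := hDpos i (by omega)
      exact_mod_cast this.ne'
    have hPPtop : PP ≠ ⊤ := by
      rw [hPP]
      exact ENNReal.prod_ne_top (fun i _ => ENNReal.natCast_ne_top _)
    rw [← div_eq_mul_inv, ENNReal.le_div_iff_mul_le (Or.inl hPP0) (Or.inl hPPtop)]
    have hPPof : PP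
        = ENNReal.ofReal (∏ i ∈ Finset.range N, (G.degree ((P y).getVert i) : ℝ)) := by
      rw [hPP, ← Nat.cast_prod, ← Nat.cast_prod, ENNReal.ofReal_natCast]
    have hrpow_nonneg : 0 ≤ ((G.degree (y : V) : ℝ)) ^ (1 + θ) :=
      Real.rpow_nonneg (by positivity) _
    rw [hPPof, ← ENNReal.ofReal_mul hrpow_nonneg]
    exact ENNReal.ofReal_le_ofReal hreal
  -- assemble the tsum bound
  calc (∑' y : {y : V // G.dist x y = N}, ENNReal.ofReal ((G.degree (y : V) : ℝ) ^ (1 + θ)))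
      ≤ ∑' y : {y : V // G.dist x y = N}, ENNReal.ofReal (Real.exp (a * N)) * wwt G (P y) :=
        ENNReal.tsum_le_tsum hpt
    _ = ∑' y : {y : V // G.dist x y = N},
          (fun t : (Σ y : V, {p : G.Walk x y // p.length = N}) =>
            ENNReal.ofReal (Real.exp (a * N)) * wwt G t.2.1) (F y) := rfl
    _ ≤ ∑' t : (Σ y : V, {p : G.Walk x y // p.length = N}),
          ENNReal.ofReal (Real.exp (a * N)) * wwt G t.2.1 :=
        ENNReal.tsum_comp_le_tsum_of_injective hFinj _
    _ = ENNReal.ofReal (Real.exp (a * N)) *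
          ∑' t : (Σ y : V, {p : G.Walk x y // p.length = N}), wwt G t.2.1 :=
        ENNReal.tsum_mul_left
    _ ≤ ENNReal.ofReal (Real.exp (a * N)) * 1 :=
        mul_le_mul_right (wwt_mass G N x) _
    _ = ENNReal.ofReal (Real.exp (a * N)) := mul_one _
end
end

section
/- Lemma 5 (degree growth in balls of repulsive graphs). Let n_* > 2 be an integer and φ: (n_*, ∞) → (1, ∞) be strictly increasing, and let G ∈ 𝔾(n_*, φ). Then for every vertex x ∈ V there exists N_x ∈ ℕ such that for all N ≥ N_x and all vertices y with ρ(x,y) ≤ N: either n(y) ≤ n_* or φ(n(y)) ≤ 2N (equivalently, max_{y ∈ B(N,x)} n(y) ≤ max{n_*, φ^{−1}(2N)}). -/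
open Real

noncomputable section

/-- **Lemma 5 (degree growth in balls of repulsive graphs).** Let `n_* > 2`, let
`φ : (n_*,∞) → (1,∞)` be strictly increasing, and `G ∈ 𝔾(n_*,φ)`. Then for every vertex
`x` there is `N_x ∈ ℕ` such that for all `N ≥ N_x` and all `y` with `ρ(x,y) ≤ N`:
either `n(y) ≤ n_*` or `φ(n(y)) ≤ 2N`. -/
theorem degree_growth_in_balls
    {V : Type} [Countable V] (G : SimpleGraph V) [∀ v : V, Fintype (G.neighborSet v)]
    (hconn : G.Connected) (nstar : ℕ) (hn : 2 < nstar)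
    (φ : ℝ → ℝ) (hmono : StrictMonoOn φ (Set.Ioi (nstar : ℝ)))
    (hφgt1 : ∀ b : ℝ, (nstar : ℝ) < b → 1 < φ b)
    (hrep : RepulsiveGraph G nstar φ) :
    ∀ x : V, ∃ Nx : ℕ, ∀ N : ℕ, Nx ≤ N → ∀ y : V, G.dist x y ≤ N →
      G.degree y ≤ nstar ∨ φ (G.degree y : ℝ) ≤ 2 * (N : ℝ) := by
  intro x
  by_cases hw : ∃ w : V, nstar < G.degree w
  · obtain ⟨w, hwdeg⟩ := hw
    by_cases huv : ∃ v : V, v ≠ w ∧ nstar < G.degree v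
    · obtain ⟨v, hvw, hvdeg⟩ := huv
      refine ⟨max (G.dist x w) (G.dist x v), fun N hN y hy => ?_⟩
      by_cases hyd : nstar < G.degree y
      swap
      · exact Or.inl (not_lt.mp hyd)
      right
      obtain ⟨z, hz, hzdeg, hzd⟩ : ∃ z, y ≠ z ∧ nstar < G.degree z ∧ G.dist x z ≤ N := by
        rcases eq_or_ne y w with rfl | hne
        · exact ⟨v, fun h => hvw h.symm, hvdeg,
            le_trans (le_trans (le_max_right _ _) hN) le_rfl⟩
        · exact ⟨w, hne, hwdeg,
            le_trans (le_trans (le_max_left _ _) hN) le_rfl⟩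
      have h1 := hrep y z hz hyd hzdeg
      have hmem : (nstar : ℝ) < (G.degree y : ℝ) := by exact_mod_cast hyd
      have h2 : φ (G.degree y : ℝ) ≤ φ (max (G.degree y : ℝ) (G.degree z : ℝ)) :=
        hmono.monotoneOn (Set.mem_Ioi.mpr hmem)
          (Set.mem_Ioi.mpr (lt_max_of_lt_left hmem)) (le_max_left _ _)
      have htri : G.dist y z ≤ G.dist y x + G.dist x z := hconn.dist_triangle
      have hyx : G.dist y x ≤ N := by rwa [SimpleGraph.dist_comm]
      have hfin : (G.dist y z : ℝ) ≤ 2 * (N : ℝ) := by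
        have : G.dist y z ≤ N + N := le_trans htri (add_le_add hyx hzd)
        push_cast
        calc (G.dist y z : ℝ) ≤ (N : ℝ) + N := by exact_mod_cast this
        _ = 2 * N := by ring
      exact le_trans (le_trans h2 h1) hfin
    · push_neg at huv
      refine ⟨⌈φ (G.degree w : ℝ)⌉₊, fun N hN y hy => ?_⟩
      by_cases hyd : nstar < G.degree y
      swap
      · exact Or.inl (not_lt.mp hyd)
      right
      have hyw : y = w := by
        by_contra hne
        exact absurd hyd (not_lt.mpr (huv y hne))
      subst hyw
      have h1 : φ (G.degree y : ℝ) ≤ (N : ℝ) :=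
        le_trans (Nat.le_ceil _) (by exact_mod_cast hN)
      nlinarith [h1, (Nat.cast_nonneg N : (0:ℝ) ≤ N)]
  · push_neg at hw
    exact ⟨0, fun N _ y _ => Or.inl (hw y)⟩
end
end
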